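/- Let $\sigma$ with vertices $v_1, \ldots, v_\ell$ be a $\delta$-signature of a time series $\pi$, and let $r_i = [v_i - \delta, v_i + \delta]$ for $1 \le i \le \ell$. Then for any time series $\tau$ with $d_F(\pi, \tau) \le \delta$, there exist vertices $w_1, \ldots, w_\ell$ of $\tau$, appearing on $\tau$ in this order, such that $w_i \in r_i$ for all $i$. -/

import Mathlib

open Set
open Filter Topology

/-- Continuous Fréchet distance between two curves parametrized on `[0,1]`. -/
noncomputable def frechetDist {E : Type*} [PseudoMetricSpace E] (f g : ℝ → E) : ℝ :=
  sInf { r : ℝ | ∃ φ ψ : ℝ → ℝ,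
    ContinuousOn φ (Set.Icc 0 1) ∧ ContinuousOn ψ (Set.Icc 0 1) ∧
    MonotoneOn φ (Set.Icc 0 1) ∧ MonotoneOn ψ (Set.Icc 0 1) ∧
    φ 0 = 0 ∧ φ 1 = 1 ∧ ψ 0 = 0 ∧ ψ 1 = 1 ∧
    ∀ t ∈ Set.Icc (0:ℝ) 1, dist (f (φ t)) (g (ψ t)) ≤ r }

/-- The directed line segment from `a` to `b` as a curve on `[0,1]`. -/
def seg {E : Type*} [AddCommGroup E] [Module ℝ E] (a b : E) : ℝ → E :=
  fun s => (1 - s) • a + s • b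

/-- Polygonal curve with vertices `p 0, …, p n`, parametrized on `[0,1]`. -/
noncomputable def polyline {E : Type*} [AddCommGroup E] [Module ℝ E] {n : ℕ}
    (p : Fin (n + 1) → E) (s : ℝ) : E :=
  let u : ℝ := s * n
  let i : ℕ := min ⌊u⌋₊ (n - 1)
  (1 - (u - i)) • p ⟨min i n, Nat.lt_succ_of_le (Nat.min_le_right _ _)⟩
    + (u - i) • p ⟨min (i + 1) n, Nat.lt_succ_of_le (Nat.min_le_right _ _)⟩

/-- Polygonal curve through the points of a list. -/
noncomputable def polylineL {E : Type*} [AddCommGroup E] [Module ℝ E] (l : List E) : ℝ → E :=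
  polyline (n := l.length - 1) (fun i => l.getD i.val 0)

/-- `τ` restricted to `[0,1]` is the polygonal curve with vertices
`τ (t 0), …, τ (t m)` at parameters `0 = t 0 < ⋯ < t m = 1`. -/
def IsPolylineOn (τ : ℝ → ℝ) (m : ℕ) (t : ℕ → ℝ) : Prop :=
  t 0 = 0 ∧ t m = 1 ∧ (∀ i < m, t i < t (i + 1)) ∧
  ∀ i < m, ∀ s, t i ≤ s → s ≤ t (i + 1) →
    τ s = τ (t i) + (s - t i) / (t (i + 1) - t i) * (τ (t (i + 1)) - τ (t i))

/-- `s` is the parameter of a vertex (local extremum) of the time series `τ`. -/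
def VertexAt (τ : ℝ → ℝ) (s : ℝ) : Prop :=
  s ∈ Set.Icc (0:ℝ) 1 ∧
    (IsLocalMaxOn τ (Set.Icc 0 1) s ∨ IsLocalMinOn τ (Set.Icc 0 1) s)

/-- A `δ`-signature of `τ : [0,1] → ℝ`, given by parameters
`0 = t 0 < t 1 < ⋯ < t ℓ = 1` (so the signature has `ℓ + 1` vertices and `ℓ ≥ 1` edges);
the signature curve itself is `polyline (fun i => τ (t i))`. -/
structure IsDeltaSignature (δ : ℝ) (τ : ℝ → ℝ) (ℓ : ℕ) (t : ℕ → ℝ) : Prop where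
  one_le : 1 ≤ ℓ
  mono : ∀ i < ℓ, t i < t (i + 1)
  start : t 0 = 0
  finish : t ℓ = 1
  nondeg : ∀ i, 1 ≤ i → i < ℓ →
    τ (t i) ∉ Set.uIcc (τ (t (i - 1))) (τ (t (i + 1)))
  dir_up : ∀ i < ℓ, τ (t i) < τ (t (i + 1)) →
    ∀ a b, t i ≤ a → a ≤ b → b ≤ t (i + 1) → τ a - τ b ≤ 2 * δ
  dir_down : ∀ i < ℓ, τ (t (i + 1)) < τ (t i) →
    ∀ a b, t i ≤ a → a ≤ b → b ≤ t (i + 1) → τ b - τ a ≤ 2 * δ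
  minedge_int : ∀ i, 1 ≤ i → i ≤ ℓ - 2 → 2 * δ < |τ (t (i + 1)) - τ (t i)|
  minedge_bnd : ∀ i < ℓ, (i = 0 ∨ i = ℓ - 1) → δ < |τ (t (i + 1)) - τ (t i)|
  range_int : ∀ i, 1 ≤ i → i ≤ ℓ - 2 → ∀ s, t i ≤ s → s ≤ t (i + 1) →
    τ s ∈ Set.uIcc (τ (t i)) (τ (t (i + 1)))
  range_first : 2 ≤ ℓ → ∀ s, t 0 ≤ s → s ≤ t 1 →
    τ s ∈ Set.uIcc (τ (t 0)) (τ (t 1)) ∪ Set.Icc (τ (t 0) - δ) (τ (t 0) + δ)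
  range_last : 2 ≤ ℓ → ∀ s, t (ℓ - 1) ≤ s → s ≤ t ℓ →
    τ s ∈ Set.uIcc (τ (t (ℓ - 1))) (τ (t ℓ)) ∪ Set.Icc (τ (t ℓ) - δ) (τ (t ℓ) + δ)
  range_single : ℓ = 1 → ∀ s, (0:ℝ) ≤ s → s ≤ 1 →
    τ s ∈ Set.uIcc (τ (t 0)) (τ (t 1)) ∪ Set.Icc (τ (t 0) - δ) (τ (t 0) + δ)
      ∪ Set.Icc (τ (t 1) - δ) (τ (t 1) + δ)

/-- One step of a traversal: each index advances by 0 or 1, at least one advances. -/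
def TravStep (a b : ℕ × ℕ) : Prop :=
  a.1 ≤ b.1 ∧ b.1 ≤ a.1 + 1 ∧ a.2 ≤ b.2 ∧ b.2 ≤ a.2 + 1 ∧ a ≠ b

/-- A traversal of two point sequences of lengths `m` and `k` (0-based indices). -/
def IsTraversal (m k : ℕ) (T : List (ℕ × ℕ)) : Prop :=
  T.head? = some (0, 0) ∧ T.getLast? = some (m - 1, k - 1) ∧ List.Chain' TravStep T

/-- Discrete Fréchet distance between the point sequences
`p 0, …, p (m-1)` and `q 0, …, q (k-1)`. -/
noncomputable def ddF {E : Type*} [PseudoMetricSpace E] (m k : ℕ) (p q : ℕ → E) : ℝ :=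
  sInf { r : ℝ | ∃ T : List (ℕ × ℕ), IsTraversal m k T ∧
    ∀ ij ∈ T, dist (p ij.1) (q ij.2) ≤ r }

/-- The subsequence of local extrema (vertex sequence) of a list of values. -/
def vertexSeq {α : Type*} [LinearOrder α] : List α → List α
  | [] => []
  | [a] => [a]
  | [a, b] => [a, b]
  | a :: b :: c :: rest =>
    if (a ≤ b ∧ b ≤ c) ∨ (c ≤ b ∧ b ≤ a) then vertexSeq (a :: c :: rest)
    else a :: vertexSeq (b :: c :: rest)
termination_by l => l.length

private lemma chain_mono {f : ℕ → ℝ} {n : ℕ} (h : ∀ i < n, f i ≤ f (i+1)) :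
    ∀ i j, i ≤ j → j ≤ n → f i ≤ f j := by
  intro i j hij hjn
  induction j with
  | zero => obtain rfl : i = 0 := Nat.le_zero.mp hij; exact le_rfl
  | succ k ih =>
    rcases Nat.lt_succ_iff_lt_or_eq.mp (Nat.lt_succ_of_le hij) with h2 | rfl
    · exact le_trans (ih (Nat.lt_succ_iff.mp h2) (le_trans (Nat.le_succ k) hjn))
        (h k (Nat.lt_of_succ_le hjn))
    · exact le_rfl

private lemma chain_lt {f : ℕ → ℝ} {n : ℕ} (h : ∀ i < n, f i < f (i+1)) :
    ∀ i j, i < j → j ≤ n → f i < f j := by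
  intro i j hij hjn
  induction j with
  | zero => omega
  | succ k ih =>
    rcases Nat.lt_succ_iff_lt_or_eq.mp hij with h2 | rfl
    · exact lt_trans (ih h2 (le_trans (Nat.le_succ k) hjn)) (h k (Nat.lt_of_succ_le hjn))
    · exact h i (Nat.lt_of_succ_le hjn)

private lemma exists_eps_matching (δ : ℝ) (π τ : ℝ → ℝ)
    (hπ : ContinuousOn π (Set.Icc 0 1)) (hτ : ContinuousOn τ (Set.Icc 0 1))
    (hd : frechetDist π τ ≤ δ) (ε : ℝ) (hε : 0 < ε) :
    ∃ φ ψ : ℝ → ℝ,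
      ContinuousOn φ (Set.Icc 0 1) ∧ ContinuousOn ψ (Set.Icc 0 1) ∧
      MonotoneOn φ (Set.Icc 0 1) ∧ MonotoneOn ψ (Set.Icc 0 1) ∧
      φ 0 = 0 ∧ φ 1 = 1 ∧ ψ 0 = 0 ∧ ψ 1 = 1 ∧
      ∀ s ∈ Set.Icc (0:ℝ) 1, dist (π (φ s)) (τ (ψ s)) ≤ δ + ε := by
  unfold frechetDist at hd
  set S := { r : ℝ | ∃ φ ψ : ℝ → ℝ,
    ContinuousOn φ (Set.Icc 0 1) ∧ ContinuousOn ψ (Set.Icc 0 1) ∧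
    MonotoneOn φ (Set.Icc 0 1) ∧ MonotoneOn ψ (Set.Icc 0 1) ∧
    φ 0 = 0 ∧ φ 1 = 1 ∧ ψ 0 = 0 ∧ ψ 1 = 1 ∧
    ∀ t ∈ Set.Icc (0:ℝ) 1, dist (π (φ t)) (τ (ψ t)) ≤ r } with hS
  have hne : S.Nonempty := by
    obtain ⟨p, hp, hmax⟩ := isCompact_Icc.exists_isMaxOn (nonempty_Icc.mpr zero_le_one)
      (continuous_dist.comp_continuousOn (hπ.prodMk hτ))
    refine ⟨dist (π p) (τ p), id, id, continuousOn_id, continuousOn_id,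
      fun a _ b _ hab => hab, fun a _ b _ hab => hab, rfl, rfl, rfl, rfl, ?_⟩
    intro s hs
    exact isMaxOn_iff.mp hmax s hs
  have hlt : sInf S < δ + ε := lt_of_le_of_lt hd (by linarith)
  obtain ⟨r, hrS, hr⟩ := exists_lt_of_csInf_lt hne hlt
  obtain ⟨φ, ψ, h1, h2, h3, h4, h5, h6, h7, h8, h9⟩ := hrS
  exact ⟨φ, ψ, h1, h2, h3, h4, h5, h6, h7, h8, fun s hs => (h9 s hs).trans hr.le⟩

private lemma exists_z (δ : ℝ) (π τ : ℝ → ℝ)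
    (hπ : ContinuousOn π (Set.Icc 0 1)) (hτ : ContinuousOn τ (Set.Icc 0 1))
    (ℓ : ℕ) (t : ℕ → ℝ) (hℓ : 1 ≤ ℓ) (hmono : ∀ i < ℓ, t i < t (i+1))
    (ht0 : t 0 = 0) (ht1 : t ℓ = 1)
    (hd : frechetDist π τ ≤ δ) :
    ∃ z : ℕ → ℝ, z 0 = 0 ∧ z ℓ = 1 ∧ (∀ i < ℓ, z i ≤ z (i+1)) ∧
      (∀ i ≤ ℓ, z i ∈ Set.Icc (0:ℝ) 1 ∧ |τ (z i) - π (t i)| ≤ δ) ∧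
      (∀ i < ℓ, ∀ s ∈ Set.Icc (z i) (z (i+1)),
        ∃ x ∈ Set.Icc (t i) (t (i+1)), |π x - τ s| ≤ δ) := by
  have htle : ∀ i < ℓ, t i ≤ t (i+1) := fun i h => (hmono i h).le
  have htmem : ∀ i ≤ ℓ, t i ∈ Set.Icc (0:ℝ) 1 := by
    intro i hi
    constructor
    · rw [← ht0]; exact chain_mono htle 0 i (Nat.zero_le i) hi
    · rw [← ht1]; exact chain_mono htle i ℓ hi le_rfl
  -- per-ε construction
  have key : ∀ ε : ℝ, 0 < ε → ∃ y : ℕ → ℝ, y 0 = 0 ∧ y ℓ = 1 ∧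
      (∀ i ≤ ℓ, y i ∈ Set.Icc (0:ℝ) 1) ∧ (∀ i < ℓ, y i ≤ y (i+1)) ∧
      (∀ i ≤ ℓ, |τ (y i) - π (t i)| ≤ δ + ε) ∧
      (∀ i < ℓ, ∀ s ∈ Set.Icc (y i) (y (i+1)),
        ∃ x ∈ Set.Icc (t i) (t (i+1)), |π x - τ s| ≤ δ + ε) := by
    intro ε hε
    obtain ⟨φ, ψ, hφc, hψc, hφm, hψm, hφ0, hφ1, hψ0, hψ1, hb⟩ :=
      exists_eps_matching δ π τ hπ hτ hd ε hε
    have hu' : ∀ i : ℕ, ∃ u, u ∈ Set.Icc (0:ℝ) 1 ∧ φ u = t (min i ℓ) := by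
      intro i
      have h1 : t (min i ℓ) ∈ Set.Icc (φ 0) (φ 1) := by
        rw [hφ0, hφ1]; exact htmem _ (min_le_right i ℓ)
      obtain ⟨u, hu1, hu2⟩ := intermediate_value_Icc zero_le_one hφc h1
      exact ⟨u, hu1, hu2⟩
    choose u₀ hu₀ using hu'
    set u : ℕ → ℝ := fun i => if i = 0 then 0 else if ℓ ≤ i then 1 else u₀ i with hu
    have humem : ∀ i, u i ∈ Set.Icc (0:ℝ) 1 := by
      intro i
      simp only [hu]
      split
      · exact ⟨le_rfl, zero_le_one⟩
      · split
        · exact ⟨zero_le_one, le_rfl⟩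
        · exact (hu₀ i).1
    have huφ : ∀ i ≤ ℓ, φ (u i) = t i := by
      intro i hi
      simp only [hu]
      split
      · rename_i h0; subst h0; rw [hφ0, ht0]
      · split
        · rename_i h0 h1
          have : i = ℓ := le_antisymm hi h1
          subst this; rw [hφ1, ht1]
        · rename_i h0 h1
          have : min i ℓ = i := min_eq_left hi
          rw [(hu₀ i).2, this]
    have humono : ∀ i j, i < j → j ≤ ℓ → u i ≤ u j := by
      intro i j hij hj
      by_contra hlt
      push_neg at hlt
      have h1 : φ (u j) ≤ φ (u i) := hφm (humem j) (humem i) hlt.le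
      rw [huφ i (le_trans hij.le hj), huφ j hj] at h1
      exact absurd (chain_lt hmono i j hij hj) (not_lt.mpr h1)
    refine ⟨fun i => ψ (u i), ?_, ?_, ?_, ?_, ?_, ?_⟩
    · show ψ (u 0) = 0
      have : u 0 = 0 := by simp [hu]
      rw [this, hψ0]
    · show ψ (u ℓ) = 1
      have : u ℓ = 1 := by
        simp only [hu]
        rw [if_neg (by omega), if_pos le_rfl]
      rw [this, hψ1]
    · intro i _
      constructor
      · rw [← hψ0]; exact hψm (Set.left_mem_Icc.mpr zero_le_one) (humem i) (humem i).1
      · rw [← hψ1]; exact hψm (humem i) (Set.right_mem_Icc.mpr zero_le_one) (humem i).2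
    · intro i hi
      exact hψm (humem i) (humem (i+1)) (humono i (i+1) (Nat.lt_succ_self i) hi)
    · intro i hi
      have := hb (u i) (humem i)
      rw [huφ i hi] at this
      rw [abs_sub_comm, ← Real.dist_eq]
      exact this
    · intro i hi s hs
      have hui : u i ≤ u (i+1) := humono i (i+1) (Nat.lt_succ_self i) hi
      have hsub : Set.Icc (u i) (u (i+1)) ⊆ Set.Icc (0:ℝ) 1 :=
        Set.Icc_subset_Icc (humem i).1 (humem (i+1)).2
      obtain ⟨c, hc, hψc'⟩ := intermediate_value_Icc hui (hψc.mono hsub) hs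
      have hcmem : c ∈ Set.Icc (0:ℝ) 1 := hsub hc
      refine ⟨φ c, ?_, ?_⟩
      · constructor
        · rw [← huφ i (le_of_lt hi)]; exact hφm (humem i) hcmem hc.1
        · rw [← huφ (i+1) hi]; exact hφm hcmem (humem (i+1)) hc.2
      · have := hb c hcmem
        rw [hψc'] at this
        rw [← Real.dist_eq]
        exact this
  -- choose sequence
  choose Y hY using fun n : ℕ => key ((n:ℝ)+1)⁻¹ (by positivity)
  set K : Set (Fin (ℓ+1) → ℝ) := Set.univ.pi (fun _ => Set.Icc (0:ℝ) 1) with hK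
  have hKc : IsCompact K := isCompact_univ_pi (fun _ => isCompact_Icc)
  have hmem : ∀ n : ℕ, (fun i : Fin (ℓ+1) => Y n i.1) ∈ K := by
    intro n
    rw [Set.mem_univ_pi]
    intro i
    exact (hY n).2.2.1 i.1 (Nat.lt_succ_iff.mp i.2)
  obtain ⟨Z, hZK, g, hg, hgt⟩ := hKc.tendsto_subseq hmem
  have hco : ∀ i : Fin (ℓ+1), Tendsto (fun n => Y (g n) i.1) atTop (𝓝 (Z i)) := by
    intro i
    exact (tendsto_pi_nhds.mp hgt) i
  set z : ℕ → ℝ := fun i => if h : i < ℓ + 1 then Z ⟨i, h⟩ else 1 with hz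
  have htend : ∀ i ≤ ℓ, Tendsto (fun n => Y (g n) i) atTop (𝓝 (z i)) := by
    intro i hi
    have h : i < ℓ + 1 := Nat.lt_succ_of_le hi
    simp only [hz, dif_pos h]
    exact hco ⟨i, h⟩
  have hzmem : ∀ i ≤ ℓ, z i ∈ Set.Icc (0:ℝ) 1 := by
    intro i hi
    have h : i < ℓ + 1 := Nat.lt_succ_of_le hi
    simp only [hz, dif_pos h]
    exact (Set.mem_univ_pi.mp hZK) ⟨i, h⟩
  have hεt : Tendsto (fun n : ℕ => δ + ((g n : ℝ)+1)⁻¹) atTop (𝓝 δ) := by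
    have h1 : Tendsto (fun n : ℕ => ((n:ℝ)+1)⁻¹) atTop (𝓝 0) := by
      have := tendsto_one_div_add_atTop_nhds_zero_nat (𝕜 := ℝ)
      simpa [one_div] using this
    have h2 : Tendsto (fun n : ℕ => ((g n : ℝ)+1)⁻¹) atTop (𝓝 0) :=
      h1.comp hg.tendsto_atTop
    simpa using tendsto_const_nhds.add h2
  have hτtend : ∀ i ≤ ℓ, Tendsto (fun n => τ (Y (g n) i)) atTop (𝓝 (τ (z i))) := by
    intro i hi
    have hcw : ContinuousWithinAt τ (Set.Icc 0 1) (z i) := hτ _ (hzmem i hi)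
    apply hcw.tendsto.comp
    rw [tendsto_nhdsWithin_iff]
    exact ⟨htend i hi, Filter.Eventually.of_forall fun n => (hY (g n)).2.2.1 i hi⟩
  have hP2 : ∀ i ≤ ℓ, |τ (z i) - π (t i)| ≤ δ := by
    intro i hi
    have h1 : Tendsto (fun n => |τ (Y (g n) i) - π (t i)|) atTop (𝓝 (|τ (z i) - π (t i)|)) :=
      (((hτtend i hi).sub tendsto_const_nhds).abs)
    exact le_of_tendsto_of_tendsto' h1 hεt (fun n => (hY (g n)).2.2.2.2.1 i hi)
  refine ⟨z, ?_, ?_, ?_, ?_, ?_⟩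
  · have h1 : Tendsto (fun n => Y (g n) 0) atTop (𝓝 (z 0)) := htend 0 (Nat.zero_le ℓ)
    have h2 : (fun n => Y (g n) 0) = fun _ => (0:ℝ) := funext fun n => (hY (g n)).1
    rw [h2] at h1
    exact (tendsto_nhds_unique h1 tendsto_const_nhds)
  · have h1 : Tendsto (fun n => Y (g n) ℓ) atTop (𝓝 (z ℓ)) := htend ℓ le_rfl
    have h2 : (fun n => Y (g n) ℓ) = fun _ => (1:ℝ) := funext fun n => (hY (g n)).2.1
    rw [h2] at h1
    exact (tendsto_nhds_unique h1 tendsto_const_nhds)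
  · intro i hi
    exact le_of_tendsto_of_tendsto' (htend i hi.le) (htend (i+1) hi)
      (fun n => (hY (g n)).2.2.2.1 i hi)
  · intro i hi
    exact ⟨hzmem i hi, hP2 i hi⟩
  · intro i hi s hs
    rcases eq_or_lt_of_le hs.1 with heq1 | hlt1
    · refine ⟨t i, Set.left_mem_Icc.mpr (htle i hi), ?_⟩
      rw [← heq1, abs_sub_comm]
      exact hP2 i hi.le
    · rcases eq_or_lt_of_le hs.2 with heq2 | hlt2
      · refine ⟨t (i+1), Set.right_mem_Icc.mpr (htle i hi), ?_⟩
        rw [heq2, abs_sub_comm]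
        exact hP2 (i+1) hi
      · have hsub : Set.Icc (t i) (t (i+1)) ⊆ Set.Icc (0:ℝ) 1 :=
          Set.Icc_subset_Icc (htmem i hi.le).1 (htmem (i+1) hi).2
        have hcont : ContinuousOn (fun x => |π x - τ s|) (Set.Icc (t i) (t (i+1))) :=
          (((hπ.mono hsub).sub continuousOn_const).abs)
        obtain ⟨x₀, hx₀, hmin⟩ := isCompact_Icc.exists_isMinOn
          (Set.nonempty_Icc.mpr (htle i hi)) hcont
        refine ⟨x₀, hx₀, ?_⟩
        have hev : ∀ᶠ n in atTop, |π x₀ - τ s| ≤ δ + ((g n : ℝ)+1)⁻¹ := by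
          filter_upwards [(htend i hi.le).eventually_lt_const hlt1,
            (htend (i+1) hi).eventually_const_lt hlt2] with n hn1 hn2
          obtain ⟨x, hx, hb⟩ := (hY (g n)).2.2.2.2.2 i hi s ⟨hn1.le, hn2.le⟩
          exact le_trans (isMinOn_iff.mp hmin x hx) hb
        exact ge_of_tendsto hεt hev

private lemma vertex_of_max_on {τ : ℝ → ℝ} {a b p : ℝ}
    (hpa : a ≤ p) (hpb : p ≤ b) (hp0 : 0 ≤ p) (hp1 : p ≤ 1)
    (hmax : ∀ x ∈ Set.Icc a b, τ x ≤ τ p)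
    (hA : a < p ∨ a ≤ 0) (hB : p < b ∨ 1 ≤ b) :
    IsLocalMaxOn τ (Set.Icc 0 1) p := by
  set r : ℝ := min (if a < p then p - a else 1) (if p < b then b - p else 1) with hr
  have hrpos : 0 < r := by
    apply lt_min
    · split
      · rename_i h; linarith
      · norm_num
    · split
      · rename_i h; linarith
      · norm_num
  have hball : Metric.ball p r ∈ 𝓝[Set.Icc (0:ℝ) 1] p :=
    nhdsWithin_le_nhds (Metric.ball_mem_nhds p hrpos)
  have hself : ∀ᶠ x in 𝓝[Set.Icc (0:ℝ) 1] p, x ∈ Set.Icc (0:ℝ) 1 := self_mem_nhdsWithin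
  filter_upwards [hball, hself] with x hx1 hx2
  have hxd : |x - p| < r := by
    rw [Metric.mem_ball, Real.dist_eq] at hx1; exact hx1
  have hax : a ≤ x := by
    rcases hA with h | h
    · have h1 : r ≤ p - a := by rw [hr]; exact (min_le_left _ _).trans (by rw [if_pos h])
      have := abs_lt.mp hxd
      linarith [this.1]
    · exact h.trans hx2.1
  have hxb : x ≤ b := by
    rcases hB with h | h
    · have h1 : r ≤ b - p := by rw [hr]; exact (min_le_right _ _).trans (by rw [if_pos h])
      have := abs_lt.mp hxd
      linarith [this.2]
    · exact hx2.2.trans h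
  exact hmax x ⟨hax, hxb⟩

private lemma vertex_of_min_on {τ : ℝ → ℝ} {a b p : ℝ}
    (hpa : a ≤ p) (hpb : p ≤ b) (hp0 : 0 ≤ p) (hp1 : p ≤ 1)
    (hmin : ∀ x ∈ Set.Icc a b, τ p ≤ τ x)
    (hA : a < p ∨ a ≤ 0) (hB : p < b ∨ 1 ≤ b) :
    IsLocalMinOn τ (Set.Icc 0 1) p := by
  have := vertex_of_max_on (τ := fun x => -τ x) hpa hpb hp0 hp1
    (fun x hx => neg_le_neg (hmin x hx)) hA hB
  have h2 := this.neg
  have h3 : (fun x => - -τ x) = τ := by funext x; ring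
  rwa [h3] at h2

private lemma endpoint_vertex_left {τ : ℝ → ℝ} (hτ : ContinuousOn τ (Set.Icc 0 1))
    {δ v0 : ℝ} (hδ : 0 < δ) (h0 : |τ 0 - v0| ≤ δ) {η : ℝ} (hη : 0 < η) (hη1 : η ≤ 1) :
    ∃ p, 0 ≤ p ∧ p ≤ η ∧ VertexAt τ p ∧ |τ p - v0| ≤ δ := by
  by_cases hv : IsLocalMaxOn τ (Set.Icc 0 1) 0 ∨ IsLocalMinOn τ (Set.Icc 0 1) 0
  · exact ⟨0, le_rfl, hη.le, ⟨⟨le_rfl, zero_le_one⟩, hv⟩, h0⟩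
  push_neg at hv
  obtain ⟨hnmax, hnmin⟩ := hv
  have hfreq_gt : ∀ η' : ℝ, 0 < η' → ∃ y, 0 < y ∧ y < η' ∧ y ≤ 1 ∧ τ 0 < τ y := by
    intro η' hη'
    have hf : ∃ᶠ x in 𝓝[Set.Icc (0:ℝ) 1] 0, ¬ τ x ≤ τ 0 := by
      rw [← Filter.not_eventually]; exact hnmax
    have hev : ∀ᶠ x in 𝓝[Set.Icc (0:ℝ) 1] (0:ℝ),
        x ∈ Metric.ball (0:ℝ) η' ∧ x ∈ Set.Icc (0:ℝ) 1 :=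
      Filter.Eventually.and (nhdsWithin_le_nhds (Metric.ball_mem_nhds (0:ℝ) hη'))
        self_mem_nhdsWithin
    obtain ⟨x, hgt, hball, hIcc⟩ := (hf.and_eventually hev).exists
    push_neg at hgt
    have hx0 : 0 < x := lt_of_le_of_ne hIcc.1 (by rintro rfl; exact absurd hgt (lt_irrefl _))
    have hxlt : x < η' := by
      rw [Metric.mem_ball, Real.dist_eq, sub_zero, abs_of_nonneg hIcc.1] at hball
      exact hball
    exact ⟨x, hx0, hxlt, hIcc.2, hgt⟩
  have hfreq_lt : ∀ η' : ℝ, 0 < η' → ∃ y, 0 < y ∧ y < η' ∧ y ≤ 1 ∧ τ y < τ 0 := by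
    intro η' hη'
    have hf : ∃ᶠ x in 𝓝[Set.Icc (0:ℝ) 1] 0, ¬ τ 0 ≤ τ x := by
      rw [← Filter.not_eventually]; exact hnmin
    have hev : ∀ᶠ x in 𝓝[Set.Icc (0:ℝ) 1] (0:ℝ),
        x ∈ Metric.ball (0:ℝ) η' ∧ x ∈ Set.Icc (0:ℝ) 1 :=
      Filter.Eventually.and (nhdsWithin_le_nhds (Metric.ball_mem_nhds (0:ℝ) hη'))
        self_mem_nhdsWithin
    obtain ⟨x, hgt, hball, hIcc⟩ := (hf.and_eventually hev).exists
    push_neg at hgt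
    have hx0 : 0 < x := lt_of_le_of_ne hIcc.1 (by rintro rfl; exact absurd hgt (lt_irrefl _))
    have hxlt : x < η' := by
      rw [Metric.mem_ball, Real.dist_eq, sub_zero, abs_of_nonneg hIcc.1] at hball
      exact hball
    exact ⟨x, hx0, hxlt, hIcc.2, hgt⟩
  have habs := abs_le.mp h0
  rcases le_or_gt v0 (τ 0) with hside | hside
  · -- minima side
    set γ : ℝ := τ 0 - v0 + δ with hγ
    have hγpos : 0 < γ := by linarith
    obtain ⟨η₀, hη₀pos, hη₀⟩ := Metric.continuousWithinAt_iff.mp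
      (hτ 0 ⟨le_rfl, zero_le_one⟩) γ hγpos
    obtain ⟨y, hy0, hyη, hy1, hty⟩ := hfreq_gt (min η₀ η) (lt_min hη₀pos hη)
    obtain ⟨x, hx0, hxy, _, htx⟩ := hfreq_lt y hy0
    have hsub : Set.Icc (0:ℝ) y ⊆ Set.Icc (0:ℝ) 1 := Set.Icc_subset_Icc le_rfl hy1
    obtain ⟨p, hpmem, hpmin⟩ := isCompact_Icc.exists_isMinOn
      (Set.nonempty_Icc.mpr hy0.le) (hτ.mono hsub)
    have hpmin' := isMinOn_iff.mp hpmin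
    have hpx : τ p ≤ τ x := hpmin' x ⟨hx0.le, hxy.le⟩
    have hp0 : 0 < p := lt_of_le_of_ne hpmem.1 (by rintro rfl; linarith)
    have hpy : p < y := lt_of_le_of_ne hpmem.2 (by rintro rfl; linarith)
    have hvert : IsLocalMinOn τ (Set.Icc 0 1) p :=
      vertex_of_min_on hpmem.1 hpmem.2 hpmem.1 (hpmem.2.trans hy1) hpmin'
        (Or.inr le_rfl) (Or.inl hpy)
    have hpd : |τ p - τ 0| < γ := by
      have := hη₀ (hsub hpmem) ?_
      · rwa [Real.dist_eq] at this
      · rw [Real.dist_eq, sub_zero, abs_of_nonneg hpmem.1]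
        exact lt_of_lt_of_le (hpy.trans_le (hyη.le.trans (min_le_left _ _))) le_rfl
    have hpd' := abs_lt.mp hpd
    refine ⟨p, hpmem.1, le_of_lt (hpy.trans_le (hyη.le.trans (min_le_right _ _))),
      ⟨⟨hpmem.1, hpmem.2.trans hy1⟩, Or.inr hvert⟩, ?_⟩
    rw [abs_le]
    constructor
    · linarith [hpd'.1]
    · linarith [hpx]
  · -- maxima side
    set γ : ℝ := v0 - τ 0 + δ with hγ
    have hγpos : 0 < γ := by linarith
    obtain ⟨η₀, hη₀pos, hη₀⟩ := Metric.continuousWithinAt_iff.mp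
      (hτ 0 ⟨le_rfl, zero_le_one⟩) γ hγpos
    obtain ⟨y, hy0, hyη, hy1, hty⟩ := hfreq_lt (min η₀ η) (lt_min hη₀pos hη)
    obtain ⟨x, hx0, hxy, _, htx⟩ := hfreq_gt y hy0
    have hsub : Set.Icc (0:ℝ) y ⊆ Set.Icc (0:ℝ) 1 := Set.Icc_subset_Icc le_rfl hy1
    obtain ⟨p, hpmem, hpmax⟩ := isCompact_Icc.exists_isMaxOn
      (Set.nonempty_Icc.mpr hy0.le) (hτ.mono hsub)
    have hpmax' := isMaxOn_iff.mp hpmax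
    have hpx : τ x ≤ τ p := hpmax' x ⟨hx0.le, hxy.le⟩
    have hp0 : 0 < p := lt_of_le_of_ne hpmem.1 (by rintro rfl; linarith)
    have hpy : p < y := lt_of_le_of_ne hpmem.2 (by rintro rfl; linarith)
    have hvert : IsLocalMaxOn τ (Set.Icc 0 1) p :=
      vertex_of_max_on hpmem.1 hpmem.2 hpmem.1 (hpmem.2.trans hy1) hpmax'
        (Or.inr le_rfl) (Or.inl hpy)
    have hpd : |τ p - τ 0| < γ := by
      have := hη₀ (hsub hpmem) ?_
      · rwa [Real.dist_eq] at this
      · rw [Real.dist_eq, sub_zero, abs_of_nonneg hpmem.1]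
        exact lt_of_lt_of_le (hpy.trans_le (hyη.le.trans (min_le_left _ _))) le_rfl
    have hpd' := abs_lt.mp hpd
    refine ⟨p, hpmem.1, le_of_lt (hpy.trans_le (hyη.le.trans (min_le_right _ _))),
      ⟨⟨hpmem.1, hpmem.2.trans hy1⟩, Or.inl hvert⟩, ?_⟩
    rw [abs_le]
    constructor
    · linarith [hpx]
    · linarith [hpd'.2]

private lemma vertexAt_reflect {τ : ℝ → ℝ} {p : ℝ} (hp : p ∈ Set.Icc (0:ℝ) 1)
    (h : VertexAt (fun s => τ (1 - s)) p) : VertexAt τ (1 - p) := by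
  obtain ⟨hmem, hv⟩ := h
  have hmem' : (1:ℝ) - p ∈ Set.Icc (0:ℝ) 1 := ⟨by linarith [hmem.2], by linarith [hmem.1]⟩
  have hmaps : Set.MapsTo (fun x : ℝ => 1 - x) (Set.Icc (0:ℝ) 1) (Set.Icc (0:ℝ) 1) :=
    fun x hx => ⟨by simp only []; linarith [hx.2], by simp only []; linarith [hx.1]⟩
  have htend : Filter.Tendsto (fun x : ℝ => 1 - x) (𝓝[Set.Icc (0:ℝ) 1] (1 - p))
      (𝓝[Set.Icc (0:ℝ) 1] p) := by
    have hc : ContinuousWithinAt (fun x : ℝ => 1 - x) (Set.Icc (0:ℝ) 1) (1 - p) :=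
      (continuous_const.sub continuous_id).continuousWithinAt
    have := hc.tendsto_nhdsWithin hmaps
    simpa using this
  refine ⟨hmem', ?_⟩
  rcases hv with hv | hv
  · left
    have := htend.eventually hv
    apply this.mono
    intro x hx
    simpa using hx
  · right
    have := htend.eventually hv
    apply this.mono
    intro x hx
    simpa using hx

private lemma endpoint_vertex_right {τ : ℝ → ℝ} (hτ : ContinuousOn τ (Set.Icc 0 1))
    {δ v1 : ℝ} (hδ : 0 < δ) (h1 : |τ 1 - v1| ≤ δ) {η : ℝ} (hη : 0 ≤ η) (hη1 : η < 1) :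
    ∃ p, η ≤ p ∧ p ≤ 1 ∧ VertexAt τ p ∧ |τ p - v1| ≤ δ := by
  set σ : ℝ → ℝ := fun s => τ (1 - s) with hσ
  have hmaps : Set.MapsTo (fun x : ℝ => 1 - x) (Set.Icc (0:ℝ) 1) (Set.Icc (0:ℝ) 1) :=
    fun x hx => ⟨by simp only []; linarith [hx.2], by simp only []; linarith [hx.1]⟩
  have hσc : ContinuousOn σ (Set.Icc 0 1) :=
    hτ.comp ((continuous_const.sub continuous_id).continuousOn) hmaps
  have hσ0 : |σ 0 - v1| ≤ δ := by simp only [hσ, sub_zero]; exact h1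
  obtain ⟨p, hp0, hpη, hpv, hpd⟩ := endpoint_vertex_left hσc hδ hσ0
    (η := 1 - η) (by linarith) (by linarith)
  refine ⟨1 - p, by linarith, by linarith, ?_, ?_⟩
  · exact vertexAt_reflect ⟨hp0, by linarith⟩ hpv
  · simpa [hσ] using hpd

section EdgeLemmas
variable {δ : ℝ} {π : ℝ → ℝ} {ℓ : ℕ} {t : ℕ → ℝ}

private lemma sig_alt (hsig : IsDeltaSignature δ π ℓ t) :
    ∀ i, 1 ≤ i → i < ℓ →
    (π (t (i-1)) < π (t i) ∧ π (t (i+1)) < π (t i)) ∨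
    (π (t i) < π (t (i-1)) ∧ π (t i) < π (t (i+1))) := by
  intro i h1 h2
  have hnd := hsig.nondeg i h1 h2
  by_contra hc
  push_neg at hc
  obtain ⟨hc1, hc2⟩ := hc
  apply hnd
  rw [Set.mem_uIcc]
  rcases lt_trichotomy (π (t (i-1))) (π (t i)) with ha | ha | ha
  · exact Or.inl ⟨ha.le, hc1 ha⟩
  · rcases le_or_gt (π (t i)) (π (t (i+1))) with hb | hb
    · exact Or.inl ⟨ha.le, hb⟩
    · exact Or.inr ⟨hb.le, ha.ge⟩
  · exact Or.inr ⟨hc2 ha, ha.le⟩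


private lemma edge_up_le (hsig : IsDeltaSignature δ π ℓ t) {j : ℕ}
    (hj : j + 1 < ℓ) (hdir : π (t j) < π (t (j+1))) :
    ∀ x, t j ≤ x → x ≤ t (j+1) → π x ≤ π (t (j+1)) := by
  intro x hx1 hx2
  by_cases h0 : j = 0
  · subst h0
    have h2 : 2 ≤ ℓ := by omega
    have hr := hsig.range_first h2 x hx1 hx2
    have hgap : δ < |π (t 1) - π (t 0)| := hsig.minedge_bnd 0 (by omega) (Or.inl rfl)
    rw [abs_of_pos (by linarith)] at hgap
    rcases hr with h | h
    · rcases Set.mem_uIcc.mp h with ⟨h1, h2⟩ | ⟨h1, h2⟩ <;> linarith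
    · obtain ⟨h1, h2⟩ := h; linarith
  · have hr := hsig.range_int j (by omega) (by omega) x hx1 hx2
    rcases Set.mem_uIcc.mp hr with ⟨h1, h2⟩ | ⟨h1, h2⟩ <;> linarith

private lemma edge_down_ge (hsig : IsDeltaSignature δ π ℓ t) {j : ℕ}
    (hj : j + 1 < ℓ) (hdir : π (t (j+1)) < π (t j)) :
    ∀ x, t j ≤ x → x ≤ t (j+1) → π (t (j+1)) ≤ π x := by
  intro x hx1 hx2
  by_cases h0 : j = 0
  · subst h0
    have h2 : 2 ≤ ℓ := by omega
    have hr := hsig.range_first h2 x hx1 hx2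
    have hgap : δ < |π (t 1) - π (t 0)| := hsig.minedge_bnd 0 (by omega) (Or.inl rfl)
    rw [abs_of_neg (by linarith)] at hgap
    rcases hr with h | h
    · rcases Set.mem_uIcc.mp h with ⟨h1, h2⟩ | ⟨h1, h2⟩ <;> linarith
    · obtain ⟨h1, h2⟩ := h; linarith
  · have hr := hsig.range_int j (by omega) (by omega) x hx1 hx2
    rcases Set.mem_uIcc.mp hr with ⟨h1, h2⟩ | ⟨h1, h2⟩ <;> linarith

private lemma edge_down_le (hsig : IsDeltaSignature δ π ℓ t) {j : ℕ}
    (hj1 : 1 ≤ j) (hj : j < ℓ) (hdir : π (t (j+1)) < π (t j)) :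
    ∀ x, t j ≤ x → x ≤ t (j+1) → π x ≤ π (t j) := by
  intro x hx1 hx2
  by_cases hlast : j = ℓ - 1
  · have h2 : 2 ≤ ℓ := by omega
    have e1 : j + 1 = ℓ := by omega
    rw [e1] at hx2 hdir
    have e2 : ℓ - 1 = j := by omega
    have hr := hsig.range_last h2 x (by rw [e2]; exact hx1) hx2
    rw [e2] at hr
    have hgap : δ < |π (t ℓ) - π (t j)| := by
      have := hsig.minedge_bnd j (by omega) (Or.inr hlast)
      rwa [e1] at this
    rw [abs_of_neg (by linarith)] at hgap
    rcases hr with h | h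
    · rcases Set.mem_uIcc.mp h with ⟨h1, h2⟩ | ⟨h1, h2⟩ <;> linarith
    · obtain ⟨h1, h2⟩ := h; linarith
  · have hr := hsig.range_int j (by omega) (by omega) x hx1 hx2
    rcases Set.mem_uIcc.mp hr with ⟨h1, h2⟩ | ⟨h1, h2⟩ <;> linarith

private lemma edge_up_ge (hsig : IsDeltaSignature δ π ℓ t) {j : ℕ}
    (hj1 : 1 ≤ j) (hj : j < ℓ) (hdir : π (t j) < π (t (j+1))) :
    ∀ x, t j ≤ x → x ≤ t (j+1) → π (t j) ≤ π x := by
  intro x hx1 hx2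
  by_cases hlast : j = ℓ - 1
  · have h2 : 2 ≤ ℓ := by omega
    have e1 : j + 1 = ℓ := by omega
    rw [e1] at hx2 hdir
    have e2 : ℓ - 1 = j := by omega
    have hr := hsig.range_last h2 x (by rw [e2]; exact hx1) hx2
    rw [e2] at hr
    have hgap : δ < |π (t ℓ) - π (t j)| := by
      have := hsig.minedge_bnd j (by omega) (Or.inr hlast)
      rwa [e1] at this
    rw [abs_of_pos (by linarith)] at hgap
    rcases hr with h | h
    · rcases Set.mem_uIcc.mp h with ⟨h1, h2⟩ | ⟨h1, h2⟩ <;> linarith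
    · obtain ⟨h1, h2⟩ := h; linarith
  · have hr := hsig.range_int j (by omega) (by omega) x hx1 hx2
    rcases Set.mem_uIcc.mp hr with ⟨h1, h2⟩ | ⟨h1, h2⟩ <;> linarith

private lemma edge_first_ge (hsig : IsDeltaSignature δ π ℓ t) (hδ : 0 ≤ δ)
    (hdir : π (t 0) < π (t 1)) :
    ∀ x, t 0 ≤ x → x ≤ t 1 → π (t 0) - δ ≤ π x := by
  intro x hx1 hx2
  by_cases h1 : ℓ = 1
  · have hr := hsig.range_single h1 x (by rwa [hsig.start] at hx1)
      (by rw [← hsig.finish, h1]; exact hx2)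
    rcases hr with (h | h) | h
    · rcases Set.mem_uIcc.mp h with ⟨h1, h2⟩ | ⟨h1, h2⟩ <;> linarith
    · obtain ⟨h1, h2⟩ := h; linarith
    · obtain ⟨h1, h2⟩ := h; linarith
  · have hr := hsig.range_first (by have := hsig.one_le; omega) x hx1 hx2
    rcases hr with h | h
    · rcases Set.mem_uIcc.mp h with ⟨h1, h2⟩ | ⟨h1, h2⟩ <;> linarith
    · obtain ⟨h1, h2⟩ := h; linarith

private lemma edge_first_le (hsig : IsDeltaSignature δ π ℓ t) (hδ : 0 ≤ δ)
    (hdir : π (t 1) < π (t 0)) :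
    ∀ x, t 0 ≤ x → x ≤ t 1 → π x ≤ π (t 0) + δ := by
  intro x hx1 hx2
  by_cases h1 : ℓ = 1
  · have hr := hsig.range_single h1 x (by rwa [hsig.start] at hx1)
      (by rw [← hsig.finish, h1]; exact hx2)
    rcases hr with (h | h) | h
    · rcases Set.mem_uIcc.mp h with ⟨h1, h2⟩ | ⟨h1, h2⟩ <;> linarith
    · obtain ⟨h1, h2⟩ := h; linarith
    · obtain ⟨h1, h2⟩ := h; linarith
  · have hr := hsig.range_first (by have := hsig.one_le; omega) x hx1 hx2
    rcases hr with h | h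
    · rcases Set.mem_uIcc.mp h with ⟨h1, h2⟩ | ⟨h1, h2⟩ <;> linarith
    · obtain ⟨h1, h2⟩ := h; linarith

private lemma edge_last_le (hsig : IsDeltaSignature δ π ℓ t) (hδ : 0 ≤ δ)
    (hdir : π (t (ℓ-1)) < π (t ℓ)) :
    ∀ x, t (ℓ-1) ≤ x → x ≤ t ℓ → π x ≤ π (t ℓ) + δ := by
  intro x hx1 hx2
  by_cases h1 : ℓ = 1
  · have e0 : ℓ - 1 = 0 := by omega
    rw [e0] at hx1 hdir
    rw [h1] at hx2 hdir ⊢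
    have hr := hsig.range_single h1 x (by rwa [hsig.start] at hx1)
      (by rw [← hsig.finish, h1]; exact hx2)
    rcases hr with (h | h) | h
    · rcases Set.mem_uIcc.mp h with ⟨h1, h2⟩ | ⟨h1, h2⟩ <;> linarith
    · obtain ⟨h1, h2⟩ := h; linarith
    · obtain ⟨h1, h2⟩ := h; linarith
  · have hr := hsig.range_last (by have := hsig.one_le; omega) x hx1 hx2
    rcases hr with h | h
    · rcases Set.mem_uIcc.mp h with ⟨h1, h2⟩ | ⟨h1, h2⟩ <;> linarith
    · obtain ⟨h1, h2⟩ := h; linarith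

private lemma edge_last_ge (hsig : IsDeltaSignature δ π ℓ t) (hδ : 0 ≤ δ)
    (hdir : π (t ℓ) < π (t (ℓ-1))) :
    ∀ x, t (ℓ-1) ≤ x → x ≤ t ℓ → π (t ℓ) - δ ≤ π x := by
  intro x hx1 hx2
  by_cases h1 : ℓ = 1
  · have e0 : ℓ - 1 = 0 := by omega
    rw [e0] at hx1 hdir
    rw [h1] at hx2 hdir ⊢
    have hr := hsig.range_single h1 x (by rwa [hsig.start] at hx1)
      (by rw [← hsig.finish, h1]; exact hx2)
    rcases hr with (h | h) | h
    · rcases Set.mem_uIcc.mp h with ⟨h1, h2⟩ | ⟨h1, h2⟩ <;> linarith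
    · obtain ⟨h1, h2⟩ := h; linarith
    · obtain ⟨h1, h2⟩ := h; linarith
  · have hr := hsig.range_last (by have := hsig.one_le; omega) x hx1 hx2
    rcases hr with h | h
    · rcases Set.mem_uIcc.mp h with ⟨h1, h2⟩ | ⟨h1, h2⟩ <;> linarith
    · obtain ⟨h1, h2⟩ := h; linarith

end EdgeLemmas

private lemma interior_step
    {δ : ℝ} (hδ : 0 ≤ δ) {π τ : ℝ → ℝ} (hτ : ContinuousOn τ (Set.Icc 0 1))
    {ℓ : ℕ} {t : ℕ → ℝ} (hsig : IsDeltaSignature δ π ℓ t)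
    {z : ℕ → ℝ} (hz0 : z 0 = 0) (hzl : z ℓ = 1)
    (hzmono : ∀ k < ℓ, z k ≤ z (k+1))
    (hzmem : ∀ k ≤ ℓ, z k ∈ Set.Icc (0:ℝ) 1)
    (hP2 : ∀ k ≤ ℓ, |τ (z k) - π (t k)| ≤ δ)
    (hP3 : ∀ k < ℓ, ∀ s ∈ Set.Icc (z k) (z (k+1)),
      ∃ x ∈ Set.Icc (t k) (t (k+1)), |π x - τ s| ≤ δ)
    (i : ℕ) (hi1 : 1 ≤ i) (hi2 : i ≤ ℓ - 1)
    (L : ℝ) (hLz : L ≤ z i)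
    (hcase : (2 ≤ i ∧ |τ L - π (t (i-1))| ≤ δ) ∨ (i = 1 ∧ L = 0)) :
    ∃ p, VertexAt τ p ∧ |τ p - π (t i)| ≤ δ ∧ L ≤ p ∧ p ≤ z (i+1) := by
  have hl2 : 2 ≤ ℓ := by omega
  have hiℓ : i < ℓ := by omega
  have e1 : i - 1 + 1 = i := by omega
  set L' := max L (z (i-1)) with hL'
  have hzi1i : z (i-1) ≤ z i := by
    have := hzmono (i-1) (by omega); rwa [e1] at this
  have hL'z : L' ≤ z i := max_le hLz hzi1i
  have hRz : z i ≤ z (i+1) := hzmono i hiℓ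
  have hL'0 : 0 ≤ L' := le_trans (hzmem (i-1) (by omega)).1 (le_max_right _ _)
  have hR1 : z (i+1) ≤ 1 := (hzmem (i+1) (by omega)).2
  have hsub : Set.Icc L' (z (i+1)) ⊆ Set.Icc (0:ℝ) 1 := Set.Icc_subset_Icc hL'0 hR1
  have hne : (Set.Icc L' (z (i+1))).Nonempty := ⟨z i, hL'z, hRz⟩
  have hτzi := abs_le.mp (hP2 i (by omega))
  have hτzi1 := abs_le.mp (hP2 (i-1) (by omega))
  have hτzip1 := abs_le.mp (hP2 (i+1) (by omega))
  have hLcase0 : (i = 1 ∧ L = 0) → L' ≤ 0 := by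
    rintro ⟨hi1', hL0⟩
    have e0 : i - 1 = 0 := by omega
    rw [hL', hL0, e0, hz0]
    norm_num
  rcases sig_alt hsig i hi1 hiℓ with ⟨hd1, hd2⟩ | ⟨hd1, hd2⟩
  · -- max-type vertex
    have hup := edge_up_le hsig (j := i-1) (by omega) (by rw [e1]; exact (e1 ▸ hd1))
    rw [e1] at hup
    have hdown := edge_down_le hsig (j := i) hi1 hiℓ hd2
    have hwin : ∀ s, z (i-1) ≤ s → s ≤ z (i+1) → τ s ≤ π (t i) + δ := by
      intro s hs1 hs2
      rcases le_total s (z i) with hsle | hsge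
      · obtain ⟨x, hx, hxb⟩ := hP3 (i-1) (by omega) s (by rw [e1]; exact ⟨hs1, hsle⟩)
        rw [e1] at hx
        have h1 := hup x hx.1 hx.2
        have h2 := abs_le.mp hxb
        linarith [h2.1]
      · obtain ⟨x, hx, hxb⟩ := hP3 i hiℓ s ⟨hsge, hs2⟩
        have h1 := hdown x hx.1 hx.2
        have h2 := abs_le.mp hxb
        linarith [h2.1]
    obtain ⟨p, hpmem, hpmax⟩ := isCompact_Icc.exists_isMaxOn hne (hτ.mono hsub)
    have hpmax' := isMaxOn_iff.mp hpmax
    have hplow : π (t i) - δ ≤ τ p :=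
      le_trans (by linarith [hτzi.1]) (hpmax' (z i) ⟨hL'z, hRz⟩)
    have hpup : τ p ≤ π (t i) + δ :=
      hwin p (le_trans (le_max_right _ _) hpmem.1) hpmem.2
    have hA : L' < p ∨ L' ≤ 0 := by
      rcases hcase with ⟨hi2', hLval⟩ | hc
      · left
        have hgap : 2*δ < π (t i) - π (t (i-1)) := by
          have := hsig.minedge_int (i-1) (by omega) (by omega)
          rw [e1] at this
          rwa [abs_of_pos (by linarith)] at this
        have hτL : τ L ≤ π (t (i-1)) + δ := by linarith [(abs_le.mp hLval).2]
        have hτzi1' : τ (z (i-1)) ≤ π (t (i-1)) + δ := by linarith [hτzi1.2]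
        have hτL' : τ L' ≤ π (t (i-1)) + δ := by
          rcases max_choice L (z (i-1)) with h | h <;> rw [hL', h] <;> assumption
        have hlt : τ L' < τ p := by linarith
        rcases eq_or_lt_of_le hpmem.1 with he | h
        · rw [← he] at hlt; exact absurd hlt (lt_irrefl _)
        · exact h
      · exact Or.inr (hLcase0 hc)
    have hB : p < z (i+1) ∨ 1 ≤ z (i+1) := by
      by_cases hic : i ≤ ℓ - 2
      · left
        have hgap : 2*δ < π (t i) - π (t (i+1)) := by
          have := hsig.minedge_int i (by omega) hic
          rw [abs_of_neg (by linarith)] at this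
          linarith
        have hlt : τ (z (i+1)) < τ p := by linarith [hτzip1.2]
        rcases eq_or_lt_of_le hpmem.2 with he | h
        · rw [he] at hlt; exact absurd hlt (lt_irrefl _)
        · exact h
      · right
        have e2 : i + 1 = ℓ := by omega
        rw [e2, hzl]
    refine ⟨p, ⟨hsub hpmem, Or.inl (vertex_of_max_on hpmem.1 hpmem.2 (hsub hpmem).1
      (hsub hpmem).2 hpmax' hA hB)⟩, abs_le.mpr ⟨by linarith, by linarith⟩,
      le_trans (le_max_left _ _) hpmem.1, hpmem.2⟩
  · -- min-type vertex
    have hdown := edge_down_ge hsig (j := i-1) (by omega) (by rw [e1]; exact (e1 ▸ hd1))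
    rw [e1] at hdown
    have hup := edge_up_ge hsig (j := i) hi1 hiℓ hd2
    have hwin : ∀ s, z (i-1) ≤ s → s ≤ z (i+1) → π (t i) - δ ≤ τ s := by
      intro s hs1 hs2
      rcases le_total s (z i) with hsle | hsge
      · obtain ⟨x, hx, hxb⟩ := hP3 (i-1) (by omega) s (by rw [e1]; exact ⟨hs1, hsle⟩)
        rw [e1] at hx
        have h1 := hdown x hx.1 hx.2
        have h2 := abs_le.mp hxb
        linarith [h2.2]
      · obtain ⟨x, hx, hxb⟩ := hP3 i hiℓ s ⟨hsge, hs2⟩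
        have h1 := hup x hx.1 hx.2
        have h2 := abs_le.mp hxb
        linarith [h2.2]
    obtain ⟨p, hpmem, hpmin⟩ := isCompact_Icc.exists_isMinOn hne (hτ.mono hsub)
    have hpmin' := isMinOn_iff.mp hpmin
    have hpup : τ p ≤ π (t i) + δ :=
      le_trans (hpmin' (z i) ⟨hL'z, hRz⟩) (by linarith [hτzi.2])
    have hplow : π (t i) - δ ≤ τ p :=
      hwin p (le_trans (le_max_right _ _) hpmem.1) hpmem.2
    have hA : L' < p ∨ L' ≤ 0 := by
      rcases hcase with ⟨hi2', hLval⟩ | hc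
      · left
        have hgap : 2*δ < π (t (i-1)) - π (t i) := by
          have := hsig.minedge_int (i-1) (by omega) (by omega)
          rw [e1] at this
          rw [abs_of_neg (by linarith)] at this
          linarith
        have hτL : π (t (i-1)) - δ ≤ τ L := by linarith [(abs_le.mp hLval).1]
        have hτzi1' : π (t (i-1)) - δ ≤ τ (z (i-1)) := by linarith [hτzi1.1]
        have hτL' : π (t (i-1)) - δ ≤ τ L' := by
          rcases max_choice L (z (i-1)) with h | h <;> rw [hL', h] <;> assumption
        have hlt : τ p < τ L' := by linarith
        rcases eq_or_lt_of_le hpmem.1 with he | h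
        · rw [← he] at hlt; exact absurd hlt (lt_irrefl _)
        · exact h
      · exact Or.inr (hLcase0 hc)
    have hB : p < z (i+1) ∨ 1 ≤ z (i+1) := by
      by_cases hic : i ≤ ℓ - 2
      · left
        have hgap : 2*δ < π (t (i+1)) - π (t i) := by
          have := hsig.minedge_int i (by omega) hic
          rwa [abs_of_pos (by linarith)] at this
        have hlt : τ p < τ (z (i+1)) := by linarith [hτzip1.1]
        rcases eq_or_lt_of_le hpmem.2 with he | h
        · rw [he] at hlt; exact absurd hlt (lt_irrefl _)
        · exact h
      · right
        have e2 : i + 1 = ℓ := by omega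
        rw [e2, hzl]
    refine ⟨p, ⟨hsub hpmem, Or.inr (vertex_of_min_on hpmem.1 hpmem.2 (hsub hpmem).1
      (hsub hpmem).2 hpmin' hA hB)⟩, abs_le.mpr ⟨by linarith, by linarith⟩,
      le_trans (le_max_left _ _) hpmem.1, hpmem.2⟩

private lemma left_w
    {δ : ℝ} (hδ : 0 ≤ δ) {π τ : ℝ → ℝ} (hτ : ContinuousOn τ (Set.Icc 0 1))
    {ℓ : ℕ} {t : ℕ → ℝ} (hsig : IsDeltaSignature δ π ℓ t)
    {z : ℕ → ℝ} (hz0 : z 0 = 0)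
    (hzmem : ∀ k ≤ ℓ, z k ∈ Set.Icc (0:ℝ) 1)
    (hP2 : ∀ k ≤ ℓ, |τ (z k) - π (t k)| ≤ δ)
    (hP3 : ∀ k < ℓ, ∀ s ∈ Set.Icc (z k) (z (k+1)),
      ∃ x ∈ Set.Icc (t k) (t (k+1)), |π x - τ s| ≤ δ)
    (b : ℝ) (hb0 : 0 ≤ b) (hb1 : b ≤ 1) (hbv : b = 0 → VertexAt τ 0) :
    ∃ p, 0 ≤ p ∧ p ≤ b ∧ VertexAt τ p ∧ |τ p - π (t 0)| ≤ δ := by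
  have hℓ1 : 1 ≤ ℓ := hsig.one_le
  have hτ0 : |τ 0 - π (t 0)| ≤ δ := by have := hP2 0 (Nat.zero_le ℓ); rwa [hz0] at this
  rcases lt_or_eq_of_le hδ with hδpos | hδ0
  · rcases lt_or_eq_of_le hb0 with hbpos | hb0'
    · exact endpoint_vertex_left hτ hδpos hτ0 hbpos hb1
    · exact ⟨0, le_rfl, hb0'.le, hbv hb0'.symm, hτ0⟩
  · subst hδ0
    refine ⟨0, le_rfl, hb0, ⟨⟨le_rfl, zero_le_one⟩, ?_⟩, hτ0⟩
    have hτ00 : τ 0 = π (t 0) := by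
      have := abs_nonpos_iff.mp hτ0; linarith
    have hτz1 : τ (z 1) = π (t 1) := by
      have := abs_nonpos_iff.mp (hP2 1 hℓ1); linarith
    have hgap := hsig.minedge_bnd 0 (by omega) (Or.inl rfl)
    have hne : π (t 1) ≠ π (t 0) := by
      intro h; rw [h] at hgap; simp at hgap
    have hbound : ∀ s, 0 ≤ s → s ≤ z 1 →
        ∃ x, (t 0 ≤ x ∧ x ≤ t 1) ∧ τ s = π x := by
      intro s h1 h2
      obtain ⟨x, hx, hxb⟩ := hP3 0 (by omega) s (by rw [hz0]; exact ⟨h1, h2⟩)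
      refine ⟨x, ⟨hx.1, hx.2⟩, ?_⟩
      have := abs_nonpos_iff.mp hxb; linarith
    have hz1pos : 0 < z 1 := by
      rcases lt_or_eq_of_le (hzmem 1 hℓ1).1 with h | h
      · exact h
      · exfalso; apply hne; rw [← hτz1, ← h, hτ00]
    rcases lt_or_gt_of_ne hne with hdir | hdir
    · -- first edge goes down : 0 is a local max
      left
      refine vertex_of_max_on (a := 0) (b := z 1) le_rfl hz1pos.le le_rfl zero_le_one
        ?_ (Or.inr le_rfl) (Or.inl hz1pos)
      intro x hx
      obtain ⟨y, hy, he⟩ := hbound x hx.1 hx.2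
      have := edge_first_le hsig le_rfl hdir y hy.1 hy.2
      rw [he, hτ00]; linarith
    · -- first edge goes up : 0 is a local min
      right
      refine vertex_of_min_on (a := 0) (b := z 1) le_rfl hz1pos.le le_rfl zero_le_one
        ?_ (Or.inr le_rfl) (Or.inl hz1pos)
      intro x hx
      obtain ⟨y, hy, he⟩ := hbound x hx.1 hx.2
      have := edge_first_ge hsig le_rfl hdir y hy.1 hy.2
      rw [he, hτ00]; linarith

private lemma right_w
    {δ : ℝ} (hδ : 0 ≤ δ) {π τ : ℝ → ℝ} (hτ : ContinuousOn τ (Set.Icc 0 1))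
    {ℓ : ℕ} {t : ℕ → ℝ} (hsig : IsDeltaSignature δ π ℓ t)
    {z : ℕ → ℝ} (hzl : z ℓ = 1)
    (hzmem : ∀ k ≤ ℓ, z k ∈ Set.Icc (0:ℝ) 1)
    (hP2 : ∀ k ≤ ℓ, |τ (z k) - π (t k)| ≤ δ)
    (hP3 : ∀ k < ℓ, ∀ s ∈ Set.Icc (z k) (z (k+1)),
      ∃ x ∈ Set.Icc (t k) (t (k+1)), |π x - τ s| ≤ δ)
    (b : ℝ) (hb0 : 0 ≤ b) (hb1 : b ≤ 1) (hbv : b = 1 → VertexAt τ 1) :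
    ∃ p, b ≤ p ∧ p ≤ 1 ∧ VertexAt τ p ∧ |τ p - π (t ℓ)| ≤ δ := by
  have hℓ1 : 1 ≤ ℓ := hsig.one_le
  have e1 : ℓ - 1 + 1 = ℓ := by omega
  have hτ1 : |τ 1 - π (t ℓ)| ≤ δ := by have := hP2 ℓ le_rfl; rwa [hzl] at this
  rcases lt_or_eq_of_le hδ with hδpos | hδ0
  · rcases lt_or_eq_of_le hb1 with hbpos | hb1'
    · exact endpoint_vertex_right hτ hδpos hτ1 hb0 hbpos
    · exact ⟨1, hb1'.le, le_rfl, hbv hb1', hτ1⟩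
  · subst hδ0
    refine ⟨1, hb1, le_rfl, ⟨⟨zero_le_one, le_rfl⟩, ?_⟩, hτ1⟩
    have hτ11 : τ 1 = π (t ℓ) := by
      have := abs_nonpos_iff.mp hτ1; linarith
    have hτzl1 : τ (z (ℓ-1)) = π (t (ℓ-1)) := by
      have := abs_nonpos_iff.mp (hP2 (ℓ-1) (by omega)); linarith
    have hgap := hsig.minedge_bnd (ℓ-1) (by omega) (Or.inr rfl)
    rw [e1] at hgap
    have hne : π (t ℓ) ≠ π (t (ℓ-1)) := by
      intro h; rw [h] at hgap; simp at hgap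
    have hbound : ∀ s, z (ℓ-1) ≤ s → s ≤ 1 →
        ∃ x, (t (ℓ-1) ≤ x ∧ x ≤ t ℓ) ∧ τ s = π x := by
      intro s h1 h2
      obtain ⟨x, hx, hxb⟩ := hP3 (ℓ-1) (by omega) s
        (by rw [e1, hzl]; exact ⟨h1, h2⟩)
      rw [e1] at hx
      refine ⟨x, ⟨hx.1, hx.2⟩, ?_⟩
      have := abs_nonpos_iff.mp hxb; linarith
    have hzl1lt : z (ℓ-1) < 1 := by
      rcases lt_or_eq_of_le (hzmem (ℓ-1) (by omega)).2 with h | h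
      · exact h
      · exfalso; apply hne; rw [← hτ11, ← h, hτzl1]
    rcases lt_or_gt_of_ne hne with hdir | hdir
    · -- last edge goes down : 1 is a local min
      right
      refine vertex_of_min_on (a := z (ℓ-1)) (b := 1) hzl1lt.le le_rfl zero_le_one le_rfl
        ?_ (Or.inl hzl1lt) (Or.inr le_rfl)
      intro x hx
      obtain ⟨y, hy, he⟩ := hbound x hx.1 hx.2
      have := edge_last_ge hsig le_rfl hdir y hy.1 hy.2
      rw [he, hτ11]; linarith
    · -- last edge goes up : 1 is a local max
      left
      refine vertex_of_max_on (a := z (ℓ-1)) (b := 1) hzl1lt.le le_rfl zero_le_one le_rfl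
        ?_ (Or.inl hzl1lt) (Or.inr le_rfl)
      intro x hx
      obtain ⟨y, hy, he⟩ := hbound x hx.1 hx.2
      have := edge_last_le hsig le_rfl hdir y hy.1 hy.2
      rw [he, hτ11]; linarith

private lemma chain_interior
    {δ : ℝ} (hδ : 0 ≤ δ) {π τ : ℝ → ℝ} (hτ : ContinuousOn τ (Set.Icc 0 1))
    {ℓ : ℕ} {t : ℕ → ℝ} (hsig : IsDeltaSignature δ π ℓ t)
    {z : ℕ → ℝ} (hz0 : z 0 = 0) (hzl : z ℓ = 1)
    (hzmono : ∀ k < ℓ, z k ≤ z (k+1))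
    (hzmem : ∀ k ≤ ℓ, z k ∈ Set.Icc (0:ℝ) 1)
    (hP2 : ∀ k ≤ ℓ, |τ (z k) - π (t k)| ≤ δ)
    (hP3 : ∀ k < ℓ, ∀ s ∈ Set.Icc (z k) (z (k+1)),
      ∃ x ∈ Set.Icc (t k) (t (k+1)), |π x - τ s| ≤ δ) :
    ∀ k, 1 ≤ k → k ≤ ℓ - 1 → ∃ w : ℕ → ℝ,
      (∀ i, 1 ≤ i → i ≤ k →
        VertexAt τ (w i) ∧ |τ (w i) - π (t i)| ≤ δ ∧ w i ≤ z (i+1)) ∧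
      (∀ i, 1 ≤ i → i + 1 ≤ k → w i ≤ w (i+1)) := by
  intro k
  induction k with
  | zero => intro h; omega
  | succ n ih =>
    intro h1 h2
    by_cases hn : n = 0
    · subst hn
      obtain ⟨p, hp1, hp2, hp3, hp4⟩ := interior_step hδ hτ hsig hz0 hzl hzmono hzmem
        hP2 hP3 1 le_rfl (by omega) 0 (hzmem 1 (by omega)).1 (Or.inr ⟨rfl, rfl⟩)
      refine ⟨fun _ => p, ?_, ?_⟩
      · intro i hi1 hi2
        have hi : i = 1 := by omega
        subst hi
        exact ⟨hp1, hp2, hp4⟩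
      · intro i hi1 hi2; omega
    · obtain ⟨w, hw1, hw2⟩ := ih (by omega) (by omega)
      obtain ⟨hv, hval, hle⟩ := hw1 n (by omega) le_rfl
      have hval' : |τ (w n) - π (t (n + 1 - 1))| ≤ δ := by
        have e : n + 1 - 1 = n := by omega
        rw [e]; exact hval
      obtain ⟨p, hp1, hp2, hp3, hp4⟩ := interior_step hδ hτ hsig hz0 hzl hzmono hzmem
        hP2 hP3 (n+1) (by omega) h2 (w n) hle (Or.inl ⟨by omega, hval'⟩)
      refine ⟨Function.update w (n+1) p, ?_, ?_⟩
      · intro i hi1 hi2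
        rcases eq_or_lt_of_le hi2 with he | hlt
        · rw [he, Function.update_self]
          exact ⟨hp1, hp2, hp4⟩
        · rw [Function.update_of_ne (by omega)]
          exact hw1 i hi1 (by omega)
      · intro i hi1 hi2
        rcases eq_or_lt_of_le hi2 with he | hlt
        · have hi : i = n := by omega
          subst hi
          rw [Function.update_of_ne (by omega), Function.update_self]
          exact hp3
        · rw [Function.update_of_ne (by omega), Function.update_of_ne (by omega)]
          exact hw2 i hi1 (by omega)

/-- if `σ` (with vertices `π (t 0), …, π (t ℓ)`) is a `δ`-signature of `π`
and `d_F(π,τ) ≤ δ`, then `τ` has vertices, in order, inside the ranges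
`[π (t i) - δ, π (t i) + δ]`. -/
theorem signature_ranges_stabbed (δ : ℝ) (hδ : 0 ≤ δ) (π τ : ℝ → ℝ)
    (hπ : ContinuousOn π (Set.Icc 0 1)) (hτ : ContinuousOn τ (Set.Icc 0 1))
    (ℓ : ℕ) (t : ℕ → ℝ) (hsig : IsDeltaSignature δ π ℓ t)
    (hd : frechetDist π τ ≤ δ) :
    ∃ s : ℕ → ℝ, (∀ i < ℓ, s i ≤ s (i + 1)) ∧
      ∀ i ≤ ℓ, VertexAt τ (s i) ∧ |τ (s i) - π (t i)| ≤ δ := by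
  obtain ⟨z, hz0, hzl, hzmono, hzmem2, hP3⟩ :=
    exists_z δ π τ hπ hτ ℓ t hsig.one_le hsig.mono hsig.start hsig.finish hd
  have hzmem : ∀ k ≤ ℓ, z k ∈ Set.Icc (0:ℝ) 1 := fun k hk => (hzmem2 k hk).1
  have hP2 : ∀ k ≤ ℓ, |τ (z k) - π (t k)| ≤ δ := fun k hk => (hzmem2 k hk).2
  by_cases hl1 : ℓ = 1
  · obtain ⟨w0, hw00, hw0le, hw0v, hw0val⟩ := left_w hδ hτ hsig hz0 hzmem hP2 hP3
      (1/2) (by norm_num) (by norm_num) (by norm_num)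
    obtain ⟨wl, hwlge, hwlle, hwlv, hwlval⟩ := right_w hδ hτ hsig hzl hzmem hP2 hP3
      (1/2) (by norm_num) (by norm_num) (by norm_num)
    refine ⟨fun i => if i = 0 then w0 else wl, ?_, ?_⟩
    · intro i hi
      have h0 : i = 0 := by omega
      subst h0
      show (if 0 = 0 then w0 else wl) ≤ (if 0 + 1 = 0 then w0 else wl)
      rw [if_pos rfl, if_neg (by omega : ¬ (0:ℕ) + 1 = 0)]
      linarith
    · intro i hi
      show VertexAt τ (if i = 0 then w0 else wl) ∧
        |τ (if i = 0 then w0 else wl) - π (t i)| ≤ δ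
      by_cases h0 : i = 0
      · rw [if_pos h0, h0]; exact ⟨hw0v, hw0val⟩
      · have h1 : i = 1 := by omega
        rw [if_neg h0, h1]
        rw [hl1] at hwlval
        exact ⟨hwlv, hwlval⟩
  · have hl2 : 2 ≤ ℓ := by have := hsig.one_le; omega
    obtain ⟨w, hw1, hw2⟩ := chain_interior hδ hτ hsig hz0 hzl hzmono hzmem hP2 hP3
      (ℓ-1) (by omega) le_rfl
    have h1v := hw1 1 le_rfl (by omega)
    have hlv := hw1 (ℓ-1) (by omega) le_rfl
    obtain ⟨w0, hw00, hw0le, hw0v, hw0val⟩ := left_w hδ hτ hsig hz0 hzmem hP2 hP3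
      (w 1) h1v.1.1.1 h1v.1.1.2 (fun h => h ▸ h1v.1)
    obtain ⟨wl, hwlge, hwlle, hwlv, hwlval⟩ := right_w hδ hτ hsig hzl hzmem hP2 hP3
      (w (ℓ-1)) hlv.1.1.1 hlv.1.1.2 (fun h => h ▸ hlv.1)
    refine ⟨fun i => if i = 0 then w0 else if i + 1 ≤ ℓ then w i else wl, ?_, ?_⟩
    · intro i hi
      show (if i = 0 then w0 else if i + 1 ≤ ℓ then w i else wl) ≤
        (if i + 1 = 0 then w0 else if i + 1 + 1 ≤ ℓ then w (i+1) else wl)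
      rw [if_neg (by omega : ¬ i + 1 = 0)]
      by_cases h0 : i = 0
      · rw [if_pos h0, if_pos (by omega : i + 1 + 1 ≤ ℓ), h0]
        exact hw0le
      · rw [if_neg h0, if_pos (by omega : i + 1 ≤ ℓ)]
        by_cases hlast : i + 1 = ℓ
        · rw [if_neg (by omega : ¬ i + 1 + 1 ≤ ℓ)]
          have he : i = ℓ - 1 := by omega
          rw [he]
          exact hwlge
        · rw [if_pos (by omega : i + 1 + 1 ≤ ℓ)]
          exact hw2 i (by omega) (by omega)
    · intro i hi
      show VertexAt τ (if i = 0 then w0 else if i + 1 ≤ ℓ then w i else wl) ∧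
        |τ (if i = 0 then w0 else if i + 1 ≤ ℓ then w i else wl) - π (t i)| ≤ δ
      by_cases h0 : i = 0
      · rw [if_pos h0, h0]; exact ⟨hw0v, hw0val⟩
      · by_cases hlast : i = ℓ
        · rw [if_neg h0, if_neg (by omega : ¬ i + 1 ≤ ℓ), hlast]
          exact ⟨hwlv, hwlval⟩
        · rw [if_neg h0, if_pos (by omega : i + 1 ≤ ℓ)]
          exact ⟨(hw1 i (by omega) (by omega)).1, (hw1 i (by omega) (by omega)).2.1⟩
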